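/- For every integer n ≥ 1, the sum p_n = Σ_{i=0}^{3n−1} (−2)^i C(i+n−1, n−1) C(6n−2−i, 3n−1) is strictly positive. -/

import Mathlib

namespace Stmt8Aux
open PowerSeries Finset

noncomputable abbrev Cz : ℤ → ℤ⟦X⟧ := PowerSeries.C (R := ℤ)

/-- `(1-X)⁻¹^(j+1)` -/
noncomputable def gg (j : ℕ) : ℤ⟦X⟧ := PowerSeries.mk fun k => (Nat.choose (j + k) k : ℤ)

/-- `(1+2X)⁻¹^(j+1)` -/
noncomputable def hp (j : ℕ) : ℤ⟦X⟧ := PowerSeries.mk fun k => (-2) ^ k * (Nat.choose (j + k) k : ℤ)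

lemma gg_succ (j : ℕ) : (1 - X) * gg (j + 1) = gg j := by
  ext k
  rw [sub_mul, one_mul, map_sub]
  cases k with
  | zero => simp [gg]
  | succ k =>
    rw [coeff_succ_X_mul]
    simp only [gg, coeff_mk]
    rw [show j + 1 + (k + 1) = (j + (k + 1)) + 1 by omega, Nat.choose_succ_succ,
      show j + 1 + k = j + (k + 1) by omega]
    push_cast
    ring

lemma gg_zero : (1 - X) * gg 0 = 1 := by
  ext k
  rw [sub_mul, one_mul, map_sub]
  cases k with
  | zero => simp [gg]
  | succ k =>
    rw [coeff_succ_X_mul]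
    simp [gg, coeff_one]

lemma hp_succ (j : ℕ) : (1 + 2 * X) * hp (j + 1) = hp j := by
  ext k
  rw [add_mul, one_mul, map_add, show (2 : ℤ⟦X⟧) * X * hp (j+1) = Cz 2 * (X * hp (j+1)) by
    simp [Cz]; ring, coeff_C_mul]
  cases k with
  | zero => simp [hp]
  | succ k =>
    rw [coeff_succ_X_mul]
    simp only [hp, coeff_mk]
    rw [show j + 1 + (k + 1) = (j + (k + 1)) + 1 by omega, Nat.choose_succ_succ,
      show j + 1 + k = j + (k + 1) by omega]
    push_cast
    ring

lemma hp_zero : (1 + 2 * X) * hp 0 = 1 := by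
  ext k
  rw [add_mul, one_mul, map_add, show (2 : ℤ⟦X⟧) * X * hp 0 = Cz 2 * (X * hp 0) by
    simp [Cz]; ring, coeff_C_mul]
  cases k with
  | zero => simp [hp]
  | succ k =>
    rw [coeff_succ_X_mul]
    simp only [hp, coeff_mk, coeff_one, Nat.zero_add, Nat.choose_self]
    push_cast
    ring

lemma gg_inv (j : ℕ) : (1 - X) ^ (j + 1) * gg j = 1 := by
  induction j with
  | zero => rw [pow_one]; exact gg_zero
  | succ j ih =>
    have : (1 - X) ^ (j + 2) * gg (j + 1) = (1 - X) ^ (j + 1) * ((1 - X) * gg (j + 1)) := by ring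
    rw [this, gg_succ]; exact ih

lemma hp_inv (j : ℕ) : (1 + 2 * X) ^ (j + 1) * hp j = 1 := by
  induction j with
  | zero => rw [pow_one]; exact hp_zero
  | succ j ih =>
    have : (1 + 2*X) ^ (j + 2) * hp (j + 1) = (1 + 2*X) ^ (j + 1) * ((1 + 2*X) * hp (j + 1)) := by
      ring
    rw [this, hp_succ]; exact ih


lemma red (a b : ℕ) :
    ((1 - X) ^ 3 * (1 + 2 * X)) * (hp (b + 1) * gg (a + 3)) = hp b * gg a := by
  have h1 := gg_succ (a + 2)
  have h2 := gg_succ (a + 1)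
  have h3 := gg_succ a
  have h4 := hp_succ b
  rw [show a + 3 = (a + 2) + 1 by omega]
  linear_combination ((1-X)^2 * (1+2*X) * hp (b+1)) * h1 + ((1-X) * (1+2*X) * hp (b+1)) * h2 +
    ((1+2*X) * hp (b+1)) * h3 + gg a * h4

lemma winv (m : ℕ) :
    ((1 - X) ^ 3 * (1 + 2 * X)) ^ (m + 3) * (hp (m + 2) * gg (3 * m + 8)) = 1 := by
  have hg := gg_inv (3 * m + 8)
  have hh := hp_inv (m + 2)
  have e : ((1 - X : ℤ⟦X⟧)) ^ (3 * m + 8 + 1) = ((1 - X) ^ 3) ^ (m + 3) := by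
    rw [← pow_mul]
    congr 1
  calc ((1 - X) ^ 3 * (1 + 2 * X)) ^ (m + 3) * (hp (m + 2) * gg (3 * m + 8))
      = ((1 - X) ^ 3) ^ (m + 3) * (1 + 2 * X) ^ (m + 3) * (hp (m + 2) * gg (3 * m + 8)) := by
        rw [mul_pow]
    _ = ((1 - X) ^ (3 * m + 8 + 1) * gg (3 * m + 8)) * ((1 + 2 * X) ^ (m + 2 + 1) * hp (m + 2)) := by
        rw [← e]; ring
    _ = 1 := by rw [hg, hh, one_mul]

lemma wne (m : ℕ) : ((1 - X : ℤ⟦X⟧) ^ 3 * (1 + 2 * X)) ^ (m + 2) * (1 - X) ^ 2 ≠ 0 := by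
  intro h
  have := congrArg (constantCoeff (R := ℤ)) h
  simp [map_pow, map_mul, map_sub, map_add, constantCoeff_X] at this

lemma dw : (d⁄dX ℤ) ((1 - X) ^ 3 * (1 + 2 * X)) = (1 - X) ^ 2 * (-(1 + 8 * X)) := by
  have dX : (d⁄dX ℤ) (X : ℤ⟦X⟧) = 1 := derivative_X
  have d1 : (d⁄dX ℤ) ((1 : ℤ⟦X⟧) - X) = -1 := by
    rw [map_sub, Derivation.map_one_eq_zero, dX]; ring
  have d2 : (d⁄dX ℤ) ((1 : ℤ⟦X⟧) + 2 * X) = 2 := by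
    rw [map_add, Derivation.map_one_eq_zero, show (2 : ℤ⟦X⟧) * X = Cz 2 * X by simp [Cz],
      Derivation.leibniz, derivative_C, dX]
    simp [Cz, smul_eq_mul]
  rw [Derivation.leibniz, Derivation.leibniz_pow, d1, d2]
  simp only [smul_eq_mul, nsmul_eq_mul]
  push_cast
  ring

lemma yder (m : ℕ) :
    (1 - X) * (1 + 2 * X) * ((d⁄dX ℤ) (hp (m + 2) * gg (3 * m + 8))) =
      Cz ((m : ℤ) + 3) * ((1 + 8 * X) * (hp (m + 2) * gg (3 * m + 8))) := by
  set Y := hp (m + 2) * gg (3 * m + 8) with hYdef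
  set W : ℤ⟦X⟧ := (1 - X) ^ 3 * (1 + 2 * X) with hWdef
  have h0 : (d⁄dX ℤ) (W ^ (m + 3) * Y) = 0 := by
    rw [winv m]; exact Derivation.map_one_eq_zero _
  rw [Derivation.leibniz, Derivation.leibniz_pow, dw] at h0
  simp only [smul_eq_mul, nsmul_eq_mul] at h0
  have hC : ((m + 3 : ℕ) : ℤ⟦X⟧) = Cz ((m : ℤ) + 3) := by
    simp [Cz, map_add, map_natCast]
  rw [hC] at h0
  have hfac : W ^ (m + 2) * (1 - X) ^ 2 *
      ((1 - X) * (1 + 2 * X) * ((d⁄dX ℤ) Y) - Cz ((m : ℤ) + 3) * ((1 + 8 * X) * Y)) = 0 := by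
    rw [show m + 3 - 1 = m + 2 by omega] at h0
    have hWp : W ^ (m + 3) = W ^ (m + 2) * ((1 - X) ^ 2 * ((1 - X) * (1 + 2 * X))) := by
      rw [hWdef]; ring
    linear_combination h0 - (d⁄dX ℤ) Y * hWp
  rcases mul_eq_zero.mp hfac with h | h
  · exact absurd h (wne m)
  · exact sub_eq_zero.mp h

def sP0 (m : ℕ) : ℤ := (-1756594667520) + (-9821279268864) * (m:ℤ) + (-23652787092480) * (m:ℤ)^2 + (-32062367135232) * (m:ℤ)^3 + (-26764178878976) * (m:ℤ)^4 + (-14090689769856) * (m:ℤ)^5 + (-4569487160000) * (m:ℤ)^6 + (-834558711168) * (m:ℤ)^7 + (-65725319744) * (m:ℤ)^8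

def sP1 (m : ℕ) : ℤ := (-8248806720) + (-43650250992) * (m:ℤ) + (-99860195136) * (m:ℤ)^2 + (-128977541376) * (m:ℤ)^3 + (-102846173760) * (m:ℤ)^4 + (-51836692512) * (m:ℤ)^5 + (-16124541792) * (m:ℤ)^6 + (-2829636720) * (m:ℤ)^7 + (-214404192) * (m:ℤ)^8

def sP2 (m : ℕ) : ℤ := 3698654400 + 19006575480 * (m:ℤ) + 42174885114 * (m:ℤ)^2 + 52775101341 * (m:ℤ)^3 + 40726155807 * (m:ℤ)^4 + 19842629130 * (m:ℤ)^5 + 5959592496 * (m:ℤ)^6 + 1008615969 * (m:ℤ)^7 + 73634103 * (m:ℤ)^8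

def su0 (m : ℕ) : ℤ := (-462331800) + (-2202447510) * (m:ℤ) + (-4445942823) * (m:ℤ)^2 + (-4929659109) * (m:ℤ)^3 + (-3242147310) * (m:ℤ)^4 + (-1264523400) * (m:ℤ)^5 + (-270752787) * (m:ℤ)^6 + (-24544701) * (m:ℤ)^7

def su1 (m : ℕ) : ℤ := 264189600 + 1277412120 * (m:ℤ) + 2622347136 * (m:ℤ)^2 + 2963354382 * (m:ℤ)^3 + 1991120616 * (m:ℤ)^4 + 795575196 * (m:ℤ)^5 + 175047480 * (m:ℤ)^6 + 16363134 * (m:ℤ)^7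

def su2 (m : ℕ) : ℤ := (-2906085600) + (-13567185720) * (m:ℤ) + (-26768085876) * (m:ℤ)^2 + (-28923571206) * (m:ℤ)^3 + (-18476981280) * (m:ℤ)^4 + (-6975154620) * (m:ℤ)^5 + (-1440209484) * (m:ℤ)^6 + (-125450694) * (m:ℤ)^7

def su3 (m : ℕ) : ℤ := 4608684864 + 21980281104 * (m:ℤ) + 44326693464 * (m:ℤ)^2 + 48969536808 * (m:ℤ)^3 + 31984746120 * (m:ℤ)^4 + 12342394248 * (m:ℤ)^5 + 2603550864 * (m:ℤ)^6 + 231463152 * (m:ℤ)^7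

def su4 (m : ℕ) : ℤ := (-26463057696) + (-117573467544) * (m:ℤ) + (-220486599072) * (m:ℤ)^2 + (-226362037188) * (m:ℤ)^3 + (-137469319944) * (m:ℤ)^4 + (-49405826232) * (m:ℤ)^5 + (-9733567656) * (m:ℤ)^6 + (-811213404) * (m:ℤ)^7

def su5 (m : ℕ) : ℤ := 37838041920 + 177463752624 * (m:ℤ) + 346899943728 * (m:ℤ)^2 + 367666851856 * (m:ℤ)^3 + 228766965480 * (m:ℤ)^4 + 83728646344 * (m:ℤ)^5 + 16717377816 * (m:ℤ)^6 + 1406566120 * (m:ℤ)^7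

def su6 (m : ℕ) : ℤ := 547355563776 + 2418355801152 * (m:ℤ) + 4534669891776 * (m:ℤ)^2 + 4676081351456 * (m:ℤ)^3 + 2862694738056 * (m:ℤ)^4 + 1040025059960 * (m:ℤ)^5 + 207536656296 * (m:ℤ)^6 + 17542406936 * (m:ℤ)^7

def su7 (m : ℕ) : ℤ := (-1451186731008) + (-6490508216832) * (m:ℤ) + (-12297250669824) * (m:ℤ)^2 + (-12792177063936) * (m:ℤ)^3 + (-7889015112000) * (m:ℤ)^4 + (-2883664623264) * (m:ℤ)^5 + (-578353469088) * (m:ℤ)^6 + (-49090778688) * (m:ℤ)^7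

def su8 (m : ℕ) : ℤ := 9323195904 + 171462526848 * (m:ℤ) + 539155130496 * (m:ℤ)^2 + 755409010240 * (m:ℤ)^3 + 570638425584 * (m:ℤ)^4 + 242021209936 * (m:ℤ)^5 + 54390666960 * (m:ℤ)^6 + 5049551920 * (m:ℤ)^7

def su9 (m : ℕ) : ℤ := 3783300618240 + 16650024841728 * (m:ℤ) + 31098415348992 * (m:ℤ)^2 + 31943450887424 * (m:ℤ)^3 + 19480566275904 * (m:ℤ)^4 + 7050687801248 * (m:ℤ)^5 + 1401829641408 * (m:ℤ)^6 + 118078370144 * (m:ℤ)^7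

def su10 (m : ℕ) : ℤ := (-5159996835840) + (-22808446207488) * (m:ℤ) + (-42768504103680) * (m:ℤ)^2 + (-44085226202880) * (m:ℤ)^3 + (-26969604236736) * (m:ℤ)^4 + (-9788516236128) * (m:ℤ)^5 + (-1950997895616) * (m:ℤ)^6 + (-164696537376) * (m:ℤ)^7

def su11 (m : ℕ) : ℤ := 2844010414080 + 12583106666496 * (m:ℤ) + 23614697515008 * (m:ℤ)^2 + 24360018737152 * (m:ℤ)^3 + 14912458229760 * (m:ℤ)^4 + 5415629787904 * (m:ℤ)^5 + 1079982554112 * (m:ℤ)^6 + 91210647808 * (m:ℤ)^7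

def su12 (m : ℕ) : ℤ := (-585531555840) + (-2590639607808) * (m:ℤ) + (-4861849488384) * (m:ℤ)^2 + (-5015297975296) * (m:ℤ)^3 + (-3070211988480) * (m:ℤ)^4 + (-1114982603392) * (m:ℤ)^5 + (-222349349376) * (m:ℤ)^6 + (-18778662784) * (m:ℤ)^7

def se0 (m : ℕ) : ℤ := (-462331800) + (-2202447510) * (m:ℤ) + (-4445942823) * (m:ℤ)^2 + (-4929659109) * (m:ℤ)^3 + (-3242147310) * (m:ℤ)^4 + (-1264523400) * (m:ℤ)^5 + (-270752787) * (m:ℤ)^6 + (-24544701) * (m:ℤ)^7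

def se1 (m : ℕ) : ℤ := (-198142200) + (-925035390) * (m:ℤ) + (-1823595687) * (m:ℤ)^2 + (-1966304727) * (m:ℤ)^3 + (-1251026694) * (m:ℤ)^4 + (-468948204) * (m:ℤ)^5 + (-95705307) * (m:ℤ)^6 + (-8181567) * (m:ℤ)^7

def se2 (m : ℕ) : ℤ := (-1717232400) + (-7884878580) * (m:ℤ) + (-15253853094) * (m:ℤ)^2 + (-16100898606) * (m:ℤ)^3 + (-10001566044) * (m:ℤ)^4 + (-3650532624) * (m:ℤ)^5 + (-723656430) * (m:ℤ)^6 + (-59998158) * (m:ℤ)^7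

def se3 (m : ℕ) : ℤ := 1174220064 + 5858271144 * (m:ℤ) + 12313913316 * (m:ℤ)^2 + 14119256838 * (m:ℤ)^3 + 9525523608 * (m:ℤ)^4 + 3776089236 * (m:ℤ)^5 + 813246420 * (m:ℤ)^6 + 73286190 * (m:ℤ)^7

def se4 (m : ℕ) : ℤ := (-16042201632) + (-68458815000) * (m:ℤ) + (-122623733856) * (m:ℤ)^2 + (-119545357968) * (m:ℤ)^3 + (-68530611264) * (m:ℤ)^4 + (-23113122744) * (m:ℤ)^5 + (-4249597824) * (m:ℤ)^6 + (-328848864) * (m:ℤ)^7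

def se5 (m : ℕ) : ℤ := 2157614496 + 15929722872 * (m:ℤ) + 37759957728 * (m:ℤ)^2 + 43365741052 * (m:ℤ)^3 + 27328153296 * (m:ℤ)^4 + 9638031616 * (m:ℤ)^5 + 1776708432 * (m:ℤ)^6 + 132426412 * (m:ℤ)^7

def se6 (m : ℕ) : ℤ := 638119721088 + 2830966488864 * (m:ℤ) + 5322543033648 * (m:ℤ)^2 + 5496472277688 * (m:ℤ)^3 + 3366400343424 * (m:ℤ)^4 + 1222565358768 * (m:ℤ)^5 + 243721169424 * (m:ℤ)^6 + 20571399864 * (m:ℤ)^7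

def se7 (m : ℕ) : ℤ := (-979507251072) + (-4427079920928) * (m:ℤ) + (-8456380665504) * (m:ℤ)^2 + (-8851429416192) * (m:ℤ)^3 + (-5483854304904) * (m:ℤ)^4 + (-2011096855992) * (m:ℤ)^5 + (-404251568424) * (m:ℤ)^6 + (-34361503992) * (m:ℤ)^7

def se8 (m : ℕ) : ℤ := (-2536574662656) + (-11155757292288) * (m:ℤ) + (-20827435322880) * (m:ℤ)^2 + (-21388930756608) * (m:ℤ)^3 + (-13043766162528) * (m:ℤ)^4 + (-4721693533248) * (m:ℤ)^5 + (-939036114720) * (m:ℤ)^6 + (-79126040640) * (m:ℤ)^7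

def se9 (m : ℕ) : ℤ := 6694997276160 + 29802503802240 * (m:ℤ) + 56232071819136 * (m:ℤ)^2 + 58283214025536 * (m:ℤ)^3 + 35829234925488 * (m:ℤ)^4 + 13060038257712 * (m:ℤ)^5 + 2612927246544 * (m:ℤ)^6 + 221309479440 * (m:ℤ)^7

def se10 (m : ℕ) : ℤ := (-1395342609408) + (-6501346419456) * (m:ℤ) + (-12748399015680) * (m:ℤ)^2 + (-13652593335936) * (m:ℤ)^3 + (-8630314812000) * (m:ℤ)^4 + (-3221870854752) * (m:ℤ)^5 + (-657949588128) * (m:ℤ)^6 + (-56717271072) * (m:ℤ)^7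

def se11 (m : ℕ) : ℤ := (-9882587658240) + (-43525389224448) * (m:ℤ) + (-81350637286656) * (m:ℤ)^2 + (-83612109240576) * (m:ℤ)^3 + (-51018278558784) * (m:ℤ)^4 + (-18474262050720) * (m:ℤ)^5 + (-3674674624320) * (m:ℤ)^6 + (-309642629856) * (m:ℤ)^7

def se12 (m : ℕ) : ℤ := 12578472529920 + 55609359473664 * (m:ℤ) + 104289856233984 * (m:ℤ)^2 + 107515173167616 * (m:ℤ)^3 + 65781454714752 * (m:ℤ)^4 + 23877679656768 * (m:ℤ)^5 + 4759628995968 * (m:ℤ)^6 + 401825059776 * (m:ℤ)^7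

def se13 (m : ℕ) : ℤ := (-6273552384000) + (-27756852940800) * (m:ℤ) + (-52091244518400) * (m:ℤ)^2 + (-53735335449600) * (m:ℤ)^3 + (-32895128448000) * (m:ℤ)^4 + (-11946242179200) * (m:ℤ)^5 + (-2382314457600) * (m:ℤ)^6 + (-201199958400) * (m:ℤ)^7

def se14 (m : ℕ) : ℤ := 1171063111680 + 5181279215616 * (m:ℤ) + 9723698976768 * (m:ℤ)^2 + 10030595950592 * (m:ℤ)^3 + 6140423976960 * (m:ℤ)^4 + 2229965206784 * (m:ℤ)^5 + 444698698752 * (m:ℤ)^6 + 37557325568 * (m:ℤ)^7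

noncomputable def sUU (m : ℕ) : ℤ⟦X⟧ := Cz (su0 m) * X^0 + Cz (su1 m) * X^1 + Cz (su2 m) * X^2 + Cz (su3 m) * X^3 + Cz (su4 m) * X^4 + Cz (su5 m) * X^5 + Cz (su6 m) * X^6 + Cz (su7 m) * X^7 + Cz (su8 m) * X^8 + Cz (su9 m) * X^9 + Cz (su10 m) * X^10 + Cz (su11 m) * X^11 + Cz (su12 m) * X^12

noncomputable def sEE (m : ℕ) : ℤ⟦X⟧ := Cz (se0 m) * X^0 + Cz (se1 m) * X^1 + Cz (se2 m) * X^2 + Cz (se3 m) * X^3 + Cz (se4 m) * X^4 + Cz (se5 m) * X^5 + Cz (se6 m) * X^6 + Cz (se7 m) * X^7 + Cz (se8 m) * X^8 + Cz (se9 m) * X^9 + Cz (se10 m) * X^10 + Cz (se11 m) * X^11 + Cz (se12 m) * X^12 + Cz (se13 m) * X^13 + Cz (se14 m) * X^14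

noncomputable def sDD (m : ℕ) : ℤ⟦X⟧ := 1 * Cz (se1 m) * X^0 + 2 * Cz (se2 m) * X^1 + 3 * Cz (se3 m) * X^2 + 4 * Cz (se4 m) * X^3 + 5 * Cz (se5 m) * X^4 + 6 * Cz (se6 m) * X^5 + 7 * Cz (se7 m) * X^6 + 8 * Cz (se8 m) * X^7 + 9 * Cz (se9 m) * X^8 + 10 * Cz (se10 m) * X^9 + 11 * Cz (se11 m) * X^10 + 12 * Cz (se12 m) * X^11 + 13 * Cz (se13 m) * X^12 + 14 * Cz (se14 m) * X^13

lemma dmon (a : ℤ) (k : ℕ) :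
    (d⁄dX ℤ) (Cz a * X ^ k) = (k : ℤ⟦X⟧) * Cz a * X ^ (k - 1) := by
  cases k with
  | zero => simp [Cz]
  | succ k =>
    rw [Derivation.leibniz, derivative_C, Derivation.leibniz_pow, derivative_X]
    simp only [smul_eq_mul, nsmul_eq_mul, mul_one, smul_zero, add_zero, Nat.succ_sub_one]
    push_cast
    ring

set_option maxHeartbeats 2000000 in
lemma hEE (m : ℕ) : (1 - X) * (1 + 2 * X) * sUU m = sEE m := by
  simp only [sUU, sEE, su0, su1, su2, su3, su4, su5, su6, su7, su8, su9, su10, su11, su12, se0, se1, se2, se3, se4, se5, se6, se7, se8, se9, se10, se11, se12, se13, se14, map_add, map_mul, map_pow, map_neg, map_ofNat,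
    map_one, map_natCast]
  ring

set_option maxHeartbeats 2000000 in
lemma hDD (m : ℕ) : (d⁄dX ℤ) (sEE m) = sDD m := by
  simp only [sEE, sDD, map_add, dmon]
  norm_num

set_option maxHeartbeats 8000000 in
lemma pid (m : ℕ) :
    Cz (sP0 m) * (X ^ 6 * ((1 - X) ^ 3 * (1 + 2 * X)) ^ 2) +
      Cz (sP1 m) * (X ^ 3 * ((1 - X) ^ 3 * (1 + 2 * X))) + Cz (sP2 m) =
    X * sDD m + Cz ((m : ℤ) + 3) * (X * (1 + 8 * X) * sUU m) - Cz (3 * (m : ℤ) + 8) * sEE m := by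
  simp only [sP0, sP1, sP2, sUU, sEE, sDD, su0, su1, su2, su3, su4, su5, su6, su7, su8, su9, su10, su11, su12, se0, se1, se2, se3, se4, se5, se6, se7, se8, se9, se10, se11, se12, se13, se14, map_add, map_mul, map_pow,
    map_neg, map_ofNat, map_one, map_natCast]
  ring

set_option maxHeartbeats 2000000 in
lemma main (m : ℕ) :
    Cz (sP0 m) * (X ^ 6 * (hp m * gg (3 * m + 2))) +
      Cz (sP1 m) * (X ^ 3 * (hp (m + 1) * gg (3 * m + 5))) +
      Cz (sP2 m) * (hp (m + 2) * gg (3 * m + 8)) =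
    X * ((d⁄dX ℤ) ((1 - X) * (1 + 2 * X) * sUU m * (hp (m + 2) * gg (3 * m + 8)))) -
      Cz (3 * (m : ℤ) + 8) * ((1 - X) * (1 + 2 * X) * sUU m * (hp (m + 2) * gg (3 * m + 8))) := by
  set Y : ℤ⟦X⟧ := hp (m + 2) * gg (3 * m + 8) with hYdef
  have hw1 : hp (m + 1) * gg (3 * m + 5) = ((1 - X) ^ 3 * (1 + 2 * X)) * Y := by
    rw [hYdef, show 3 * m + 8 = (3 * m + 5) + 3 by omega]
    exact (red (3 * m + 5) (m + 1)).symm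
  have hw2 : hp m * gg (3 * m + 2) = ((1 - X) ^ 3 * (1 + 2 * X)) ^ 2 * Y := by
    have h1 : ((1 - X) ^ 3 * (1 + 2 * X)) * (hp (m + 1) * gg ((3 * m + 2) + 3)) =
        hp m * gg (3 * m + 2) := red (3 * m + 2) m
    rw [show (3 * m + 2) + 3 = 3 * m + 5 by omega] at h1
    rw [← h1, hw1]
    ring
  have hder : (d⁄dX ℤ) ((1 - X) * (1 + 2 * X) * sUU m * Y) =
      ((1 - X) * (1 + 2 * X) * sUU m) * ((d⁄dX ℤ) Y) +
        Y * ((d⁄dX ℤ) ((1 - X) * (1 + 2 * X) * sUU m)) := by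
    rw [Derivation.leibniz]
    simp only [smul_eq_mul]
  have hqU : (d⁄dX ℤ) ((1 - X) * (1 + 2 * X) * sUU m) = sDD m := by
    rw [hEE]; exact hDD m
  have hY' := yder m
  rw [← hYdef] at hY'
  linear_combination Cz (sP0 m) * X ^ 6 * hw2 + Cz (sP1 m) * X ^ 3 * hw1 - X * hder -
    (X * Y) * hqU - (X * sUU m) * hY' + Y * pid m + (Cz (3 * (m : ℤ) + 8) * Y) * hEE m

noncomputable def sq (m : ℕ) : ℤ := PowerSeries.coeff (R := ℤ) (3 * m + 2) (hp m * gg (3 * m + 2))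

lemma keyrec (m : ℕ) : sP0 m * sq m + sP1 m * sq (m + 1) + sP2 m * sq (m + 2) = 0 := by
  have H := congrArg (PowerSeries.coeff (R := ℤ) (3 * m + 8)) (main m)
  set V : ℤ⟦X⟧ := (1 - X) * (1 + 2 * X) * sUU m * (hp (m + 2) * gg (3 * m + 8)) with hVdef
  have e6 : (PowerSeries.coeff (R := ℤ) (3 * m + 8)) (X ^ 6 * (hp m * gg (3 * m + 2))) = sq m := by
    rw [show 3 * m + 8 = 3 * m + 2 + 6 by omega, coeff_X_pow_mul, sq]
  have e3 : (PowerSeries.coeff (R := ℤ) (3 * m + 8)) (X ^ 3 * (hp (m + 1) * gg (3 * m + 5))) =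
      sq (m + 1) := by
    rw [show 3 * m + 8 = 3 * m + 5 + 3 by omega, coeff_X_pow_mul, sq,
      show 3 * (m + 1) + 2 = 3 * m + 5 by omega]
  have e0 : (PowerSeries.coeff (R := ℤ) (3 * m + 8)) (hp (m + 2) * gg (3 * m + 8)) = sq (m + 2) := by
    rw [sq, show 3 * (m + 2) + 2 = 3 * m + 8 by omega]
  have eX : (PowerSeries.coeff (R := ℤ) (3 * m + 8)) (X * (d⁄dX ℤ) V) =
      (3 * (m : ℤ) + 8) * (PowerSeries.coeff (R := ℤ) (3 * m + 8)) V := by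
    rw [show 3 * m + 8 = 3 * m + 7 + 1 by omega, coeff_succ_X_mul, coeff_derivative,
      show 3 * m + 7 + 1 = 3 * m + 8 by omega]
    push_cast
    ring
  rw [map_add, map_add, map_sub, coeff_C_mul, coeff_C_mul, coeff_C_mul, coeff_C_mul,
    e6, e3, e0, eX] at H
  linarith [H]

lemma sq_eq (m : ℕ) : sq m = ∑ i ∈ range (3 * m + 3),
    (-2 : ℤ) ^ i * (Nat.choose (i + m) m : ℤ) * (Nat.choose (6 * m + 4 - i) (3 * m + 2) : ℤ) := by
  rw [sq, coeff_mul, Finset.Nat.sum_antidiagonal_eq_sum_range_succ_mk]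
  rw [show 3 * m + 2 + 1 = 3 * m + 3 by omega]
  refine Finset.sum_congr rfl fun i hi => ?_
  have hi' : i ≤ 3 * m + 2 := by
    have := Finset.mem_range.mp hi; omega
  simp only [hp, gg, coeff_mk]
  have h1 : 3 * m + 2 + (3 * m + 2 - i) = 6 * m + 4 - i := by omega
  have h2 : Nat.choose (6 * m + 4 - i) (3 * m + 2 - i) = Nat.choose (6 * m + 4 - i) (3 * m + 2) := by
    rw [show 3 * m + 2 - i = (6 * m + 4 - i) - (3 * m + 2) by omega]
    exact Nat.choose_symm (by omega)
  have h3 : Nat.choose (m + i) i = Nat.choose (i + m) m := by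
    rw [Nat.add_comm m i]
    have h := Nat.choose_symm (Nat.le_add_left m i)
    rwa [Nat.add_sub_cancel] at h
  rw [h1, h2, h3]
  try ring

lemma sq0 : sq 0 = 4 := by
  rw [sq_eq]
  decide

lemma sq1 : sq 1 = 36 := by
  rw [sq_eq]
  decide

lemma p2pos (m : ℕ) : 0 < sP2 m := by
  have h : (0 : ℤ) ≤ (m : ℤ) := Int.natCast_nonneg m
  rw [sP2]
  positivity

lemma p0neg (m : ℕ) : sP0 m < 0 := by
  have h : (0 : ℤ) ≤ (m : ℤ) := Int.natCast_nonneg m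
  have : sP0 m = -(1756594667520 + 9821279268864 * (m:ℤ) + 23652787092480 * (m:ℤ)^2 +
      32062367135232 * (m:ℤ)^3 + 26764178878976 * (m:ℤ)^4 + 14090689769856 * (m:ℤ)^5 +
      4569487160000 * (m:ℤ)^6 + 834558711168 * (m:ℤ)^7 + 65725319744 * (m:ℤ)^8) := by
    rw [sP0]; ring
  rw [this, neg_lt_zero]
  positivity

lemma p1neg (m : ℕ) : sP1 m < 0 := by
  have h : (0 : ℤ) ≤ (m : ℤ) := Int.natCast_nonneg m
  have : sP1 m = -(8248806720 + 43650250992 * (m:ℤ) + 99860195136 * (m:ℤ)^2 +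
      128977541376 * (m:ℤ)^3 + 102846173760 * (m:ℤ)^4 + 51836692512 * (m:ℤ)^5 +
      16124541792 * (m:ℤ)^6 + 2829636720 * (m:ℤ)^7 + 214404192 * (m:ℤ)^8) := by
    rw [sP1]; ring
  rw [this, neg_lt_zero]
  positivity

lemma sq_pos : ∀ m, 0 < sq m := by
  have H : ∀ m, 0 < sq m ∧ 0 < sq (m + 1) := by
    intro m
    induction m with
    | zero => exact ⟨by rw [sq0]; norm_num, by rw [sq1]; norm_num⟩
    | succ k ih =>
      refine ⟨ih.2, ?_⟩
      have h := keyrec k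
      nlinarith [mul_pos (neg_pos.mpr (p0neg k)) ih.1, mul_pos (neg_pos.mpr (p1neg k)) ih.2,
        p2pos k]
  exact fun m => (H m).1

end Stmt8Aux

open Finset in
/-- For every integer `n ≥ 1`,
`p_n = Σ_{i=0}^{3n−1} (−2)^i C(i+n−1, n−1) C(6n−2−i, 3n−1) > 0`. -/
theorem stmt_8 (n : ℕ) (hn : 1 ≤ n) :
    0 < ∑ i ∈ range (3 * n), (-2 : ℤ) ^ i *
          (Nat.choose (i + n - 1) (n - 1) : ℤ) *
          (Nat.choose (6 * n - 2 - i) (3 * n - 1) : ℤ) := by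
  obtain ⟨m, rfl⟩ : ∃ m, n = m + 1 := ⟨n - 1, by omega⟩
  have h := Stmt8Aux.sq_pos m
  rw [Stmt8Aux.sq_eq] at h
  have e : ∑ i ∈ range (3 * (m + 1)), (-2 : ℤ) ^ i *
          (Nat.choose (i + (m + 1) - 1) ((m + 1) - 1) : ℤ) *
          (Nat.choose (6 * (m + 1) - 2 - i) (3 * (m + 1) - 1) : ℤ) =
      ∑ i ∈ range (3 * m + 3), (-2 : ℤ) ^ i * (Nat.choose (i + m) m : ℤ) *
          (Nat.choose (6 * m + 4 - i) (3 * m + 2) : ℤ) := by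
    rw [show 3 * (m + 1) = 3 * m + 3 by omega]
    refine Finset.sum_congr rfl fun i _ => ?_
    rw [show i + (m + 1) - 1 = i + m by omega, show (m + 1) - 1 = m by omega,
      show 6 * (m + 1) - 2 - i = 6 * m + 4 - i by omega, show 3 * m + 3 - 1 = 3 * m + 2 by omega]
  rw [e]
  exact h
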